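/- For every integer N ≥ 1, the identity P_{3N+1} · (1 − x q^{3N+1}) = P_{3N} − P_{3N−2} · x q^{3N+1} holds in the formal power series ring ℤ[[x, y, q]]. -/

import Mathlib

/-- The `i`-th largest part (0-indexed) of the weakly decreasing list of parts of a
partition of `n` (entries beyond the number of parts are `0`, which realizes the
padding by zeros). -/
def nthPart {n : ℕ} (P : n.Partition) (i : ℕ) : ℕ :=
  ((P.parts.sort (· ≤ ·)).reverse).getD i 0

/-- The `j`-th component (`1 ≤ j ≤ m - 1`) of the alternating sum type modulo `m` of a
partition of `n`: `Σ_j = ∑_i (λ_{(i-1)m+j} - λ_{(i-1)m+j+1})` (1-indexed parts, padded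
by zeros; summing over `i < n + 1` covers every nonzero term). -/
def altSumType (m : ℕ) {n : ℕ} (P : n.Partition) (j : ℕ) : ℕ :=
  ∑ i ∈ Finset.range (n + 1), (nthPart P (i * m + (j - 1)) - nthPart P (i * m + j))

/-- `aN N s1 s2 n` : the number of partitions of `n` with exactly `N` (positive) parts,
every part occurring at most twice, and alternating sum type modulo `3` equal to
`(s1, s2)`. -/
noncomputable def aN (N s1 s2 n : ℕ) : ℕ :=
  Nat.card {P : n.Partition // P.parts.card = N ∧ (∀ p, P.parts.count p ≤ 2) ∧
    altSumType 3 P 1 = s1 ∧ altSumType 3 P 2 = s2}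

/-- The formal power series `A_N ∈ ℤ[[x, y, q]]` (variables `x = X 0`, `y = X 1`,
`q = X 2`): `A_0 = 1` and, for `N ≥ 1`,
`A_N = ∑_{Σ₁, Σ₂ ≥ 0, n ≥ 1} a_N(Σ₁, Σ₂; n) x^{Σ₁} y^{Σ₂} q^n`. -/
noncomputable def Aser (N : ℕ) : MvPowerSeries (Fin 3) ℤ :=
  if N = 0 then 1
  else fun e => if 1 ≤ e 2 then (aN N (e 0) (e 1) (e 2) : ℤ) else 0

/-- The variable `x`. -/
noncomputable def Xv : MvPowerSeries (Fin 3) ℤ := MvPowerSeries.X 0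

/-- The variable `y`. -/
noncomputable def Yv : MvPowerSeries (Fin 3) ℤ := MvPowerSeries.X 1

/-- The variable `q`. -/
noncomputable def Qv : MvPowerSeries (Fin 3) ℤ := MvPowerSeries.X 2

/-- The formal power series `P_N = ∑_{i=0}^{N} A_i ∈ ℤ[[x, y, q]]`. -/
noncomputable def Pser (N : ℕ) : MvPowerSeries (Fin 3) ℤ :=
  ∑ i ∈ Finset.range (N + 1), Aser i

/-! ### Auxiliary development -/

/-- Remove 1 from every part, dropping resulting zeros. -/
def Fms (s : Multiset ℕ) : Multiset ℕ := (s.filter (fun x => x - 1 ≠ 0)).map (· - 1)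

lemma sum_ge_card (s : Multiset ℕ) (h : ∀ x ∈ s, 0 < x) : Multiset.card s ≤ s.sum := by
  induction s using Multiset.induction_on with
  | empty => simp
  | cons a s ih =>
    simp only [Multiset.card_cons, Multiset.sum_cons]
    have ha : 0 < a := h a (Multiset.mem_cons_self _ _)
    have := ih (fun x hx => h x (Multiset.mem_cons_of_mem hx))
    omega

lemma map_sub_one_sum (s : Multiset ℕ) (h : ∀ x ∈ s, 0 < x) :
    (s.map (· - 1)).sum = s.sum - Multiset.card s := by
  induction s using Multiset.induction_on with
  | empty => simp
  | cons a s ih =>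
    simp only [Multiset.map_cons, Multiset.sum_cons, Multiset.card_cons]
    have ha : 0 < a := h a (Multiset.mem_cons_self _ _)
    have h2 := ih (fun x hx => h x (Multiset.mem_cons_of_mem hx))
    have h3 := sum_ge_card s (fun x hx => h x (Multiset.mem_cons_of_mem hx))
    omega

lemma Fms_sum (s : Multiset ℕ) (h : ∀ x ∈ s, 0 < x) :
    (Fms s).sum = s.sum - Multiset.card s := by
  have hsplit : s.map (· - 1) = Fms s + (s.filter (fun x => ¬ (x - 1 ≠ 0))).map (· - 1) := by
    rw [Fms, ← Multiset.map_add, Multiset.filter_add_not]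
  have hz : ((s.filter (fun x => ¬ (x - 1 ≠ 0))).map (· - 1)).sum = 0 := by
    apply Multiset.sum_eq_zero
    intro x hx
    simp only [Multiset.mem_map, Multiset.mem_filter] at hx
    obtain ⟨a, ⟨_, ha⟩, rfl⟩ := hx
    omega
  have := map_sub_one_sum s h
  rw [hsplit, Multiset.sum_add, hz, add_zero] at this
  exact this

lemma Fms_card (s : Multiset ℕ) :
    Multiset.card (Fms s) = Multiset.card s - Multiset.card (s.filter (fun x => x - 1 = 0)) := by
  rw [Fms, Multiset.card_map]
  have := Multiset.filter_add_not (fun x => x - 1 ≠ 0) s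
  have hc := congrArg Multiset.card this
  rw [Multiset.card_add] at hc
  have h2 : Multiset.filter (fun a => ¬ (a - 1 ≠ 0)) s = Multiset.filter (fun x => x - 1 = 0) s := by
    apply Multiset.filter_congr
    intro x _
    tauto
  rw [h2] at hc
  omega

lemma nthPart_pos {n : ℕ} (P : n.Partition) (i : ℕ) (h : i < Multiset.card P.parts) :
    1 ≤ nthPart P i := by
  rw [nthPart]
  have hlen : (P.parts.sort (· ≤ ·)).reverse.length = Multiset.card P.parts := by
    rw [List.length_reverse, Multiset.length_sort]
  rw [List.getD_eq_getElem _ _ (by omega)]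
  have hmem : (P.parts.sort (· ≤ ·)).reverse[i] ∈ (P.parts.sort (· ≤ ·)).reverse :=
    List.getElem_mem _
  rw [List.mem_reverse, Multiset.mem_sort] at hmem
  exact P.parts_pos hmem

lemma nthPart_zero {n : ℕ} (P : n.Partition) (i : ℕ) (h : Multiset.card P.parts ≤ i) :
    nthPart P i = 0 := by
  rw [nthPart]
  apply List.getD_eq_default
  rw [List.length_reverse, Multiset.length_sort]
  exact h

/-- Structure of the descending parts lists of `P` and a partition with parts `Fms P.parts`. -/
lemma parts_decomp {n n' : ℕ} (P : n.Partition) (P' : n'.Partition)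
    (h : P'.parts = Fms P.parts) :
    ∃ A B : List ℕ, (P.parts.sort (· ≤ ·)).reverse = A ++ B ∧
      (P'.parts.sort (· ≤ ·)).reverse = A.map (· - 1) ∧
      (∀ x ∈ A, 2 ≤ x) ∧ (∀ x ∈ B, x = 1) := by
  classical
  set l := P.parts.sort (· ≤ ·) with hl
  have hls : List.Pairwise (· ≤ ·) l := Multiset.pairwise_sort _ _
  have hlm : (↑l : Multiset ℕ) = P.parts := Multiset.sort_eq _ _
  set b := l.filter (fun x => decide (x - 1 = 0)) with hb
  set a := l.filter (fun x => ! decide (x - 1 = 0)) with ha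
  have hmema : ∀ x ∈ a, 2 ≤ x := by
    intro x hx
    rw [ha, List.mem_filter] at hx
    have h1 : x ∈ P.parts := by rw [← hlm]; exact_mod_cast hx.1
    have h2 := P.parts_pos h1
    have := hx.2
    simp only [Bool.not_eq_true', decide_eq_false_iff_not] at this
    omega
  have hmemb : ∀ x ∈ b, x = 1 := by
    intro x hx
    rw [hb, List.mem_filter] at hx
    have h1 : x ∈ P.parts := by rw [← hlm]; exact_mod_cast hx.1
    have h2 := P.parts_pos h1
    have := of_decide_eq_true hx.2
    omega
  have hperm : (b ++ a).Perm l := List.filter_append_perm _ l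
  have hsorted : List.Pairwise (· ≤ ·) (b ++ a) := by
    rw [List.pairwise_append]
    refine ⟨hls.filter _, hls.filter _, ?_⟩
    intro x hx y hy
    have := hmemb x hx
    have := hmema y hy
    omega
  have hlba : l = b ++ a := (List.Perm.eq_of_pairwise' hsorted hls hperm).symm
  have ha_sorted : List.Pairwise (· ≤ ·) (a.map (· - 1)) := by
    apply List.Pairwise.map (· - 1) (fun x y hxy => Nat.sub_le_sub_right hxy 1)
    exact hls.filter _
  have hmult : (↑(a.map (· - 1)) : Multiset ℕ) = P'.parts := by
    rw [h, Fms, ← Multiset.map_coe]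
    congr 1
    rw [← hlm, Multiset.filter_coe]
    congr 1
    rw [ha]
    congr 1
    funext x
    simp [decide_not]
  have hsort' : P'.parts.sort (· ≤ ·) = a.map (· - 1) := by
    apply List.Perm.eq_of_pairwise' (Multiset.pairwise_sort _ _) ha_sorted
    rw [← Multiset.coe_eq_coe, Multiset.sort_eq, hmult]
  refine ⟨a.reverse, b.reverse, ?_, ?_, ?_, ?_⟩
  · rw [hlba, List.reverse_append]
  · rw [hsort', ← List.map_reverse]
  · intro x hx; exact hmema x (List.mem_reverse.mp hx)
  · intro x hx; exact hmemb x (List.mem_reverse.mp hx)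

lemma nthPart_Fms {n n' : ℕ} (P : n.Partition) (P' : n'.Partition)
    (h : P'.parts = Fms P.parts) (i : ℕ) : nthPart P' i = nthPart P i - 1 := by
  obtain ⟨A, B, h1, h2, hA, hB⟩ := parts_decomp P P' h
  rw [nthPart, nthPart, h1, h2]
  rcases lt_or_ge i A.length with hi | hi
  · rw [List.getD_append _ _ _ _ hi,
      List.getD_eq_getElem _ _ (by rw [List.length_map]; omega),
      List.getD_eq_getElem _ _ hi, List.getElem_map]
  · rw [List.getD_eq_default _ _ (by rw [List.length_map]; omega),
      List.getD_append_right _ _ _ _ hi]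
    rcases lt_or_ge (i - A.length) B.length with hj | hj
    · rw [List.getD_eq_getElem _ _ hj]
      have := hB _ (List.getElem_mem hj)
      omega
    · rw [List.getD_eq_default _ _ hj]

lemma card_parts_le {n : ℕ} (P : n.Partition) : Multiset.card P.parts ≤ n := by
  have := sum_ge_card P.parts (fun x hx => P.parts_pos hx)
  rwa [P.parts_sum] at this

lemma altSumType_eq_range {n : ℕ} (P : n.Partition) (j R : ℕ) (hj : 1 ≤ j)
    (hR : Multiset.card P.parts ≤ R) :
    altSumType 3 P j
      = ∑ i ∈ Finset.range R, (nthPart P (i * 3 + (j - 1)) - nthPart P (i * 3 + j)) := by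
  have key : ∀ S : ℕ, Multiset.card P.parts ≤ S →
      ∑ i ∈ Finset.range S, (nthPart P (i * 3 + (j - 1)) - nthPart P (i * 3 + j))
      = ∑ i ∈ Finset.range (Multiset.card P.parts),
          (nthPart P (i * 3 + (j - 1)) - nthPart P (i * 3 + j)) := by
    intro S hS
    symm
    apply Finset.sum_subset (Finset.range_subset_range.mpr hS)
    intro i _ hi
    rw [Finset.mem_range, not_lt] at hi
    rw [nthPart_zero P _ (by omega), nthPart_zero P _ (by omega)]
    omega
  rw [altSumType, key (n + 1) (by have := card_parts_le P; omega), key R hR]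

lemma altSum_shift1 {n n' : ℕ} (N : ℕ) (P : n.Partition) (P' : n'.Partition)
    (h : P'.parts = Fms P.parts) (hc : Multiset.card P.parts = 3 * N + 1) :
    altSumType 3 P 1 = altSumType 3 P' 1 + 1 := by
  have hc' : Multiset.card P'.parts ≤ 3 * N + 1 := by
    rw [h, Fms, Multiset.card_map]
    calc Multiset.card (Multiset.filter _ P.parts) ≤ Multiset.card P.parts :=
          Multiset.card_le_card (Multiset.filter_le _ _)
      _ = 3 * N + 1 := hc
  rw [altSumType_eq_range P 1 (3 * N + 1) le_rfl (le_of_eq hc),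
      altSumType_eq_range P' 1 (3 * N + 1) le_rfl hc']
  have hN : N ∈ Finset.range (3 * N + 1) := Finset.mem_range.mpr (by omega)
  rw [← Finset.add_sum_erase _ _ hN, ← Finset.add_sum_erase _ _ hN]
  have hsum : ∑ i ∈ (Finset.range (3 * N + 1)).erase N,
        (nthPart P (i * 3 + (1 - 1)) - nthPart P (i * 3 + 1))
      = ∑ i ∈ (Finset.range (3 * N + 1)).erase N,
        (nthPart P' (i * 3 + (1 - 1)) - nthPart P' (i * 3 + 1)) := by
    apply Finset.sum_congr rfl
    intro i hi
    rw [Finset.mem_erase, Finset.mem_range] at hi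
    rw [nthPart_Fms P P' h, nthPart_Fms P P' h]
    rcases lt_or_ge i N with hiN | hiN
    · have h1 : 1 ≤ nthPart P (i * 3 + 1) := nthPart_pos P _ (by omega)
      omega
    · have hgt : N < i := lt_of_le_of_ne hiN (fun e => hi.1 e.symm)
      have h0 : nthPart P (i * 3 + (1 - 1)) = 0 := nthPart_zero P _ (by omega)
      have h1 : nthPart P (i * 3 + 1) = 0 := nthPart_zero P _ (by omega)
      omega
  rw [hsum]
  have hp1 : 1 ≤ nthPart P (N * 3 + (1 - 1)) := nthPart_pos P _ (by omega)
  have hp0 : nthPart P (N * 3 + 1) = 0 := nthPart_zero P _ (by omega)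
  have e1 := nthPart_Fms P P' h (N * 3 + (1 - 1))
  have e2 := nthPart_Fms P P' h (N * 3 + 1)
  omega

lemma altSum_shift2 {n n' : ℕ} (N : ℕ) (P : n.Partition) (P' : n'.Partition)
    (h : P'.parts = Fms P.parts) (hc : Multiset.card P.parts = 3 * N + 1) :
    altSumType 3 P 2 = altSumType 3 P' 2 := by
  have hc' : Multiset.card P'.parts ≤ 3 * N + 1 := by
    rw [h, Fms, Multiset.card_map]
    calc Multiset.card (Multiset.filter _ P.parts) ≤ Multiset.card P.parts :=
          Multiset.card_le_card (Multiset.filter_le _ _)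
      _ = 3 * N + 1 := hc
  rw [altSumType_eq_range P 2 (3 * N + 1) (by omega) (le_of_eq hc),
      altSumType_eq_range P' 2 (3 * N + 1) (by omega) hc']
  apply Finset.sum_congr rfl
  intro i hi
  rw [Finset.mem_range] at hi
  rw [nthPart_Fms P P' h, nthPart_Fms P P' h]
  rcases lt_or_ge i N with hiN | hiN
  · have h1 : 1 ≤ nthPart P (i * 3 + 2) := nthPart_pos P _ (by omega)
    omega
  · have h0 : nthPart P (i * 3 + (2 - 1)) = 0 := nthPart_zero P _ (by omega)
    have h1 : nthPart P (i * 3 + 2) = 0 := nthPart_zero P _ (by omega)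
    omega

lemma Fms_pos {s : Multiset ℕ} {x : ℕ} (hx : x ∈ Fms s) : 0 < x := by
  rw [Fms, Multiset.mem_map] at hx
  obtain ⟨a, ha, rfl⟩ := hx
  rw [Multiset.mem_filter] at ha
  omega

lemma map_add_one_sum (s : Multiset ℕ) : (s.map (· + 1)).sum = s.sum + Multiset.card s := by
  induction s using Multiset.induction_on with
  | empty => simp
  | cons a s ih => simp only [Multiset.map_cons, Multiset.sum_cons, Multiset.card_cons, ih]; ring

lemma card_filter_eq_count (s : Multiset ℕ) (hpos : ∀ x ∈ s, 0 < x) :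
    Multiset.card (s.filter (fun x => x - 1 = 0)) = Multiset.count 1 s := by
  rw [Multiset.count_eq_card_filter_eq]
  congr 1
  apply Multiset.filter_congr
  intro x hx
  have := hpos x hx
  omega

lemma Fms_count (s : Multiset ℕ) (p : ℕ) :
    Multiset.count p (Fms s) ≤ Multiset.count (p + 1) s := by
  rw [Fms, Multiset.count_map, Multiset.filter_filter, Multiset.count_eq_card_filter_eq]
  apply Multiset.card_le_card
  apply Multiset.monotone_filter_right
  intro b hb
  omega

lemma replicate_eq_filter (s : Multiset ℕ) (hpos : ∀ x ∈ s, 0 < x) :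
    s.filter (fun x => x - 1 = 0)
      = Multiset.replicate (Multiset.card (s.filter (fun x => x - 1 = 0))) 1 := by
  rw [Multiset.eq_replicate]
  refine ⟨rfl, fun b hb => ?_⟩
  rw [Multiset.mem_filter] at hb
  have := hpos b hb.1
  omega

lemma Fms_G (s : Multiset ℕ) (k : ℕ) (hpos : ∀ x ∈ s, 0 < x) :
    Fms (s.map (· + 1) + Multiset.replicate k 1) = s := by
  rw [Fms, Multiset.filter_add]
  have h1 : (s.map (· + 1)).filter (fun x => x - 1 ≠ 0) = s.map (· + 1) := by
    rw [Multiset.filter_eq_self]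
    intro a ha
    rw [Multiset.mem_map] at ha
    obtain ⟨b, hb, rfl⟩ := ha
    have := hpos b hb
    omega
  have h2 : (Multiset.replicate k 1).filter (fun x => x - 1 ≠ 0) = 0 := by
    rw [Multiset.filter_eq_nil]
    intro a ha
    have := Multiset.eq_of_mem_replicate ha
    omega
  rw [h1, h2, add_zero, Multiset.map_map]
  rw [Multiset.map_congr rfl (fun x _ => by simp : ∀ x ∈ s, ((· - 1) ∘ (· + 1)) x = id x)]
  exact Multiset.map_id s

lemma G_of_F (s : Multiset ℕ) (hpos : ∀ x ∈ s, 0 < x) :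
    (Fms s).map (· + 1)
      + Multiset.replicate (Multiset.card (s.filter (fun x => x - 1 = 0))) 1 = s := by
  rw [Fms, Multiset.map_map, ← replicate_eq_filter s hpos]
  have h1 : Multiset.map ((· + 1) ∘ (· - 1)) (s.filter (fun x => x - 1 ≠ 0))
      = s.filter (fun x => x - 1 ≠ 0) := by
    rw [Multiset.map_congr rfl (fun x hx => ?_), Multiset.map_id]
    rw [Multiset.mem_filter] at hx
    have := hx.2
    simp only [Function.comp_apply, id_eq]
    omega
  rw [h1]
  have h2 : s.filter (fun x => x - 1 = 0) = s.filter (fun a => ¬ (a - 1 ≠ 0)) := by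
    apply Multiset.filter_congr
    intro x _
    tauto
  rw [h2, Multiset.filter_add_not]

lemma G_count (s : Multiset ℕ) (k p : ℕ) (hpos : ∀ x ∈ s, 0 < x)
    (hs : ∀ q, Multiset.count q s ≤ 2) (hk : k ≤ 2) :
    Multiset.count p (s.map (· + 1) + Multiset.replicate k 1) ≤ 2 := by
  rw [Multiset.count_add, Multiset.count_replicate]
  rcases le_or_gt p 1 with hp | hp
  · have h0 : Multiset.count p (s.map (· + 1)) = 0 := by
      rw [Multiset.count_map]
      have h1 : Multiset.filter (fun a => p = a + 1) s = 0 := by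
        rw [Multiset.filter_eq_nil]
        intro a ha
        have := hpos a ha
        omega
      rw [h1, Multiset.card_zero]
    rw [h0]
    split <;> omega
  · have h1 : (if (1 : ℕ) = p then k else 0) = 0 := if_neg (by omega)
    have h2 : Multiset.count p (s.map (· + 1)) = Multiset.count (p - 1) s := by
      rw [Multiset.count_map, Multiset.count_eq_card_filter_eq]
      congr 1
      apply Multiset.filter_congr
      intro x _
      omega
    rw [h1, h2, add_zero]
    exact hs (p - 1)

lemma card_three {α : Type*} [Finite α] (p q r u : α → Prop)
    (hpq : ∀ a, p a → q a → False) (hpr : ∀ a, p a → r a → False)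
    (hqr : ∀ a, q a → r a → False) :
    Nat.card {a : α // (p a ∨ q a ∨ r a) ∧ u a} =
      Nat.card {a : α // p a ∧ u a} + Nat.card {a : α // q a ∧ u a}
        + Nat.card {a : α // r a ∧ u a} := by
  classical
  have e : {a : α // (p a ∨ q a ∨ r a) ∧ u a} ≃
      ({a : α // p a ∧ u a} ⊕ {a : α // q a ∧ u a}) ⊕ {a : α // r a ∧ u a} :=
    { toFun := fun x =>
        if hp : p x.1 then Sum.inl (Sum.inl ⟨x.1, hp, x.2.2⟩)
        else if hq : q x.1 then Sum.inl (Sum.inr ⟨x.1, hq, x.2.2⟩)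
        else Sum.inr ⟨x.1, by rcases x.2.1 with h | h | h; exacts [absurd h hp, absurd h hq, h],
          x.2.2⟩
      invFun := fun x => match x with
        | Sum.inl (Sum.inl ⟨a, h⟩) => ⟨a, Or.inl h.1, h.2⟩
        | Sum.inl (Sum.inr ⟨a, h⟩) => ⟨a, Or.inr (Or.inl h.1), h.2⟩
        | Sum.inr ⟨a, h⟩ => ⟨a, Or.inr (Or.inr h.1), h.2⟩
      left_inv := fun x => by
        rcases x with ⟨a, ha⟩
        by_cases hp : p a
        · simp [hp]
        · by_cases hq : q a <;> simp [hp, hq]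
      right_inv := fun x => by
        rcases x with (⟨a, ha⟩ | ⟨a, ha⟩) | ⟨a, ha⟩
        · simp [ha.1]
        · have h1 : ¬ p a := fun hp => hpq a hp ha.1
          simp [h1, ha.1]
        · have h1 : ¬ p a := fun hp => hpr a hp ha.1
          have h2 : ¬ q a := fun hq => hqr a hq ha.1
          simp [h1, h2] }
  rw [Nat.card_congr e, Nat.card_sum, Nat.card_sum]

lemma F_sum {n N : ℕ} (P : n.Partition) (hc : Multiset.card P.parts = 3 * N + 1) :
    (Fms P.parts).sum = n - (3 * N + 1) := by
  rw [Fms_sum _ (fun x hx => P.parts_pos hx), P.parts_sum, hc]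

lemma F_cond {n n' N s1 s2 : ℕ} (P : n.Partition) (P' : n'.Partition)
    (hPP' : P'.parts = Fms P.parts)
    (hc : Multiset.card P.parts = 3 * N + 1) (hcnt : ∀ p, P.parts.count p ≤ 2)
    (h1 : altSumType 3 P 1 = s1) (h2 : altSumType 3 P 2 = s2) :
    (Multiset.card P'.parts = 3 * N - 1 ∨ Multiset.card P'.parts = 3 * N
        ∨ Multiset.card P'.parts = 3 * N + 1)
      ∧ (∀ p, P'.parts.count p ≤ 2) ∧ altSumType 3 P' 1 = s1 - 1 ∧ altSumType 3 P' 2 = s2 := by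
  have hpos : ∀ x ∈ P.parts, 0 < x := fun x hx => P.parts_pos hx
  have hcard : Multiset.card P'.parts
      = (3 * N + 1) - Multiset.card (P.parts.filter (fun x => x - 1 = 0)) := by
    rw [hPP', Fms_card, hc]
  have hcle : Multiset.card (P.parts.filter (fun x => x - 1 = 0)) ≤ 2 := by
    rw [card_filter_eq_count _ hpos]; exact hcnt 1
  refine ⟨by omega, fun p => ?_, ?_, ?_⟩
  · rw [hPP']; exact le_trans (Fms_count _ p) (hcnt (p + 1))
  · have := altSum_shift1 N P P' hPP' hc; omega
  · have := altSum_shift2 N P P' hPP' hc; omega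

lemma G_cond {n n' N s1 s2 : ℕ} (P : n.Partition) (P' : n'.Partition)
    (hG : P.parts = P'.parts.map (· + 1)
        + Multiset.replicate (3 * N + 1 - Multiset.card P'.parts) 1)
    (hN : 1 ≤ N) (hs1 : 1 ≤ s1)
    (hc' : Multiset.card P'.parts = 3 * N - 1 ∨ Multiset.card P'.parts = 3 * N
        ∨ Multiset.card P'.parts = 3 * N + 1)
    (hcnt' : ∀ p, P'.parts.count p ≤ 2)
    (h1' : altSumType 3 P' 1 = s1 - 1) (h2' : altSumType 3 P' 2 = s2) :
    Multiset.card P.parts = 3 * N + 1 ∧ (∀ p, P.parts.count p ≤ 2)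
      ∧ altSumType 3 P 1 = s1 ∧ altSumType 3 P 2 = s2 := by
  have hpos' : ∀ x ∈ P'.parts, 0 < x := fun x hx => P'.parts_pos hx
  have hcard : Multiset.card P.parts = 3 * N + 1 := by
    rw [hG, Multiset.card_add, Multiset.card_map, Multiset.card_replicate]
    omega
  have hF : P'.parts = Fms P.parts := by rw [hG, Fms_G _ _ hpos']
  refine ⟨hcard, fun p => ?_, ?_, ?_⟩
  · rw [hG]; exact G_count _ _ p hpos' hcnt' (by omega)
  · have := altSum_shift1 N P P' hF hcard; omega
  · have := altSum_shift2 N P P' hF hcard; omega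

lemma G_sum {n' : ℕ} (P' : n'.Partition) (k : ℕ) :
    (P'.parts.map (· + 1) + Multiset.replicate k 1).sum
      = n' + Multiset.card P'.parts + k := by
  rw [Multiset.sum_add, map_add_one_sum, Multiset.sum_replicate, P'.parts_sum, smul_eq_mul,
    mul_one]

lemma G_pos {s : Multiset ℕ} {k x : ℕ} (hx : x ∈ s.map (· + 1) + Multiset.replicate k 1) :
    0 < x := by
  rw [Multiset.mem_add] at hx
  rcases hx with hx | hx
  · rw [Multiset.mem_map] at hx
    obtain ⟨a, _, rfl⟩ := hx
    omega
  · have := Multiset.eq_of_mem_replicate hx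
    omega

noncomputable def keyEquiv (N s1 s2 n : ℕ) (hN : 1 ≤ N) (hs1 : 1 ≤ s1) (hn : 3 * N + 1 ≤ n) :
    {P : n.Partition // Multiset.card P.parts = 3 * N + 1 ∧ (∀ p, P.parts.count p ≤ 2) ∧
      altSumType 3 P 1 = s1 ∧ altSumType 3 P 2 = s2} ≃
    {P : (n - (3 * N + 1)).Partition //
      (Multiset.card P.parts = 3 * N - 1 ∨ Multiset.card P.parts = 3 * N
        ∨ Multiset.card P.parts = 3 * N + 1) ∧ (∀ p, P.parts.count p ≤ 2) ∧
      altSumType 3 P 1 = s1 - 1 ∧ altSumType 3 P 2 = s2} where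
  toFun x := ⟨⟨Fms x.1.parts, fun hx => Fms_pos hx, F_sum x.1 x.2.1⟩,
    F_cond x.1 _ rfl x.2.1 x.2.2.1 x.2.2.2.1 x.2.2.2.2⟩
  invFun y := ⟨⟨y.1.parts.map (· + 1)
        + Multiset.replicate (3 * N + 1 - Multiset.card y.1.parts) 1,
      fun hx => G_pos hx,
      by rw [G_sum]; rcases y.2.1 with h | h | h <;> omega⟩,
    G_cond _ y.1 rfl hN hs1 y.2.1 y.2.2.1 y.2.2.2.1 y.2.2.2.2⟩
  left_inv x := by
    apply Subtype.ext
    apply Nat.Partition.ext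
    show (Fms x.1.parts).map (· + 1)
        + Multiset.replicate (3 * N + 1 - Multiset.card (Fms x.1.parts)) 1 = x.1.parts
    have hpos : ∀ z ∈ x.1.parts, 0 < z := fun z hz => x.1.parts_pos hz
    have hle : Multiset.card (x.1.parts.filter (fun z => z - 1 = 0))
        ≤ Multiset.card x.1.parts := Multiset.card_le_card (Multiset.filter_le _ _)
    have hk : 3 * N + 1 - Multiset.card (Fms x.1.parts)
        = Multiset.card (x.1.parts.filter (fun z => z - 1 = 0)) := by
      rw [Fms_card]
      have := x.2.1
      omega
    rw [hk]
    exact G_of_F _ hpos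
  right_inv y := by
    apply Subtype.ext
    apply Nat.Partition.ext
    show Fms (y.1.parts.map (· + 1)
        + Multiset.replicate (3 * N + 1 - Multiset.card y.1.parts) 1) = y.1.parts
    exact Fms_G _ _ (fun z hz => y.1.parts_pos hz)

lemma aN_split (N s1' s2 n' : ℕ) (hN : 1 ≤ N) :
    Nat.card {P : n'.Partition //
      (Multiset.card P.parts = 3 * N - 1 ∨ Multiset.card P.parts = 3 * N
        ∨ Multiset.card P.parts = 3 * N + 1) ∧ (∀ p, P.parts.count p ≤ 2) ∧
      altSumType 3 P 1 = s1' ∧ altSumType 3 P 2 = s2}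
    = aN (3 * N - 1) s1' s2 n' + aN (3 * N) s1' s2 n' + aN (3 * N + 1) s1' s2 n' := by
  rw [aN, aN, aN]
  exact card_three (fun P : n'.Partition => Multiset.card P.parts = 3 * N - 1)
    (fun P => Multiset.card P.parts = 3 * N) (fun P => Multiset.card P.parts = 3 * N + 1)
    (fun P => (∀ p, P.parts.count p ≤ 2) ∧ altSumType 3 P 1 = s1' ∧ altSumType 3 P 2 = s2)
    (fun a h1 h2 => by omega) (fun a h1 h2 => by omega) (fun a h1 h2 => by omega)

lemma count_key (N s1 s2 n : ℕ) (hN : 1 ≤ N) (hs1 : 1 ≤ s1) (hn : 3 * N + 1 ≤ n) :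
    aN (3 * N + 1) s1 s2 n
      = aN (3 * N - 1) (s1 - 1) s2 (n - (3 * N + 1)) + aN (3 * N) (s1 - 1) s2 (n - (3 * N + 1))
        + aN (3 * N + 1) (s1 - 1) s2 (n - (3 * N + 1)) := by
  rw [← aN_split N (s1 - 1) s2 (n - (3 * N + 1)) hN, aN]
  exact Nat.card_congr (keyEquiv N s1 s2 n hN hs1 hn)

lemma aN_n_zero (M s1 s2 : ℕ) (hM : 1 ≤ M) : aN M s1 s2 0 = 0 := by
  rw [aN]
  haveI : IsEmpty {P : (0 : ℕ).Partition // Multiset.card P.parts = M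
      ∧ (∀ p, P.parts.count p ≤ 2) ∧ altSumType 3 P 1 = s1 ∧ altSumType 3 P 2 = s2} := by
    constructor
    rintro ⟨P, hc, -⟩
    have h1 := sum_ge_card P.parts (fun x hx => P.parts_pos hx)
    rw [P.parts_sum] at h1
    omega
  exact Nat.card_of_isEmpty

lemma aN_vanish (N s1 s2 n : ℕ) (h : s1 = 0 ∨ n < 3 * N + 1) :
    aN (3 * N + 1) s1 s2 n = 0 := by
  rw [aN]
  haveI : IsEmpty {P : n.Partition // Multiset.card P.parts = 3 * N + 1
      ∧ (∀ p, P.parts.count p ≤ 2) ∧ altSumType 3 P 1 = s1 ∧ altSumType 3 P 2 = s2} := by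
    constructor
    rintro ⟨P, hc, hcnt, h1, h2⟩
    have hsum := sum_ge_card P.parts (fun x hx => P.parts_pos hx)
    rw [P.parts_sum] at hsum
    rcases h with hs | hn
    · let P' : (n - (3 * N + 1)).Partition :=
        ⟨Fms P.parts, fun hx => Fms_pos hx, F_sum P hc⟩
      have := altSum_shift1 N P P' rfl hc
      omega
    · omega
  exact Nat.card_of_isEmpty

lemma coeff_Aser {M : ℕ} (hM : M ≠ 0) (e : Fin 3 →₀ ℕ) :
    MvPowerSeries.coeff e (Aser M) = (aN M (e 0) (e 1) (e 2) : ℤ) := by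
  have hA : Aser M = (fun e : Fin 3 →₀ ℕ => if 1 ≤ e 2 then (aN M (e 0) (e 1) (e 2) : ℤ) else 0) :=
    if_neg hM
  rw [MvPowerSeries.coeff_apply, hA]
  beta_reduce
  by_cases h : 1 ≤ e 2
  · rw [if_pos h]
  · rw [if_neg h]
    have h2 : e 2 = 0 := by omega
    rw [h2, aN_n_zero M _ _ (by omega), Nat.cast_zero]

lemma Aser_key (N : ℕ) (hN : 1 ≤ N) :
    Aser (3 * N + 1)
      = (Aser (3 * N - 1) + Aser (3 * N) + Aser (3 * N + 1)) * (Xv * Qv ^ (3 * N + 1)) := by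
  have hd : Xv * Qv ^ (3 * N + 1)
      = MvPowerSeries.monomial (Finsupp.single 0 1 + Finsupp.single 2 (3 * N + 1)) 1 := by
    rw [Xv, Qv, MvPowerSeries.X_pow_eq, MvPowerSeries.X_def,
      MvPowerSeries.monomial_mul_monomial, one_mul]
  apply MvPowerSeries.ext
  intro e
  rw [hd, MvPowerSeries.coeff_mul_monomial]
  set d : Fin 3 →₀ ℕ := Finsupp.single 0 1 + Finsupp.single 2 (3 * N + 1) with hdd
  have hd0 : d 0 = 1 := by simp [hdd, Finsupp.single_apply]
  have hd1 : d 1 = 0 := by simp [hdd, Finsupp.single_apply]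
  have hd2 : d 2 = 3 * N + 1 := by simp [hdd, Finsupp.single_apply]
  split_ifs with hle
  · have he0 : 1 ≤ e 0 := by
      have := Finsupp.le_def.mp hle 0
      omega
    have he2 : 3 * N + 1 ≤ e 2 := by
      have := Finsupp.le_def.mp hle 2
      omega
    rw [mul_one, map_add, map_add, coeff_Aser (by omega), coeff_Aser (by omega),
      coeff_Aser (by omega), coeff_Aser (by omega)]
    rw [Finsupp.tsub_apply, Finsupp.tsub_apply, Finsupp.tsub_apply, hd0, hd1, hd2,
      Nat.sub_zero]
    have := count_key N (e 0) (e 1) (e 2) hN he0 he2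
    exact_mod_cast this
  · rw [coeff_Aser (by omega)]
    have hv : e 0 = 0 ∨ e 2 < 3 * N + 1 := by
      by_contra hcon
      push_neg at hcon
      apply hle
      rw [Finsupp.le_def]
      intro i
      fin_cases i <;> simp [hdd, Finsupp.single_apply] <;> omega
    rw [aN_vanish N _ _ _ hv, Nat.cast_zero]

theorem stmt14 (N : ℕ) (hN : 1 ≤ N) :
    Pser (3 * N + 1) * (1 - Xv * Qv ^ (3 * N + 1)) =
      Pser (3 * N) - Pser (3 * N - 2) * (Xv * Qv ^ (3 * N + 1)) := by
  obtain ⟨m, rfl⟩ : ∃ m, N = m + 1 := ⟨N - 1, by omega⟩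
  have h1 : 3 * (m + 1) + 1 = 3 * m + 4 := by ring
  have h2 : 3 * (m + 1) = 3 * m + 3 := by ring
  have h3 : 3 * (m + 1) - 2 = 3 * m + 1 := by omega
  rw [h1, h3, h2]
  have key := Aser_key (m + 1) (by omega)
  rw [h1, show 3 * (m + 1) - 1 = 3 * m + 2 by omega, h2] at key
  have p1 : Pser (3 * m + 4) = Pser (3 * m + 3) + Aser (3 * m + 4) :=
    Finset.sum_range_succ _ _
  have p2 : Pser (3 * m + 3) = Pser (3 * m + 2) + Aser (3 * m + 3) :=
    Finset.sum_range_succ _ _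
  have p3 : Pser (3 * m + 2) = Pser (3 * m + 1) + Aser (3 * m + 2) :=
    Finset.sum_range_succ _ _
  linear_combination (1 - Xv * Qv ^ (3 * m + 4)) * p1 - (Xv * Qv ^ (3 * m + 4)) * p2
    - (Xv * Qv ^ (3 * m + 4)) * p3 + key
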